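/- Let H be an entropy and n ∈ ℕ. Then: (i) H is continuous on P_{>0}(n) and, for every p ∈ P(n) and every sequence {p_k} ⊂ P_{>0}(n) with p_k → p, one has liminf_{k→∞} H(p_k) ≥ H(p); (ii) for all p ∈ P(n): −log(max_{i∈[n]} p_i) ≤ H(p) ≤ log |supp(p)|, where |supp(p)| is the number of nonzero entries of p. -/

import Mathlib

open scoped BigOperators ENNReal

/-- A probability vector: nonnegative entries summing to 1. -/
def IsProbVec {n : ℕ} (p : Fin n → ℝ) : Prop :=
  (∀ i, 0 ≤ p i) ∧ ∑ i, p i = 1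

/-- The uniform probability vector on `n` outcomes. -/
noncomputable def uniform (n : ℕ) : Fin n → ℝ := fun _ => (n : ℝ)⁻¹

/-- Kronecker (tensor) product of two vectors. -/
noncomputable def kron {n m : ℕ} (p : Fin n → ℝ) (q : Fin m → ℝ) : Fin (n * m) → ℝ :=
  fun i => p (finProdFinEquiv.symm i).1 * q (finProdFinEquiv.symm i).2

/-- Sum of the `k` largest entries (for vectors with nonnegative entries):
the supremum of sums over subsets of at most `k` indices. -/
noncomputable def maxPartialSum {n : ℕ} (p : Fin n → ℝ) (k : ℕ) : ℝ :=
  sSup { x | ∃ s : Finset (Fin n), s.card ≤ k ∧ ∑ i ∈ s, p i = x }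

/-- `p` majorises `q`: every partial sum of the `k` largest entries of `p`
dominates that of `q` (entries beyond a vector's length count as 0). -/
def Majorizes {n m : ℕ} (p : Fin n → ℝ) (q : Fin m → ℝ) : Prop :=
  ∀ k : ℕ, maxPartialSum q k ≤ maxPartialSum p k

/-- A channel: an `n × m` row-stochastic matrix. -/
def IsStochastic {n m : ℕ} (W : Matrix (Fin n) (Fin m) ℝ) : Prop :=
  (∀ i j, 0 ≤ W i j) ∧ ∀ i, ∑ j, W i j = 1

/-- Relative majorisation of pairs: some channel maps `(p, q)` to `(p', q')`. -/
def RelMaj {n m : ℕ} (p q : Fin n → ℝ) (p' q' : Fin m → ℝ) : Prop :=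
  ∃ W : Matrix (Fin n) (Fin m) ℝ, IsStochastic W ∧
    Matrix.vecMul p W = p' ∧ Matrix.vecMul q W = q'

/-- An entropy: a `[0,∞)`-valued function on probability vectors of all finite dimensions
that is monotone under mixing (majorisation), additive for Kronecker products,
and normalised so that `H(u₂) = log 2` (binary logarithm). -/
structure IsEntropy (H : (n : ℕ) → (Fin n → ℝ) → ℝ) : Prop where
  nonneg : ∀ {n : ℕ} (p : Fin n → ℝ), IsProbVec p → 0 ≤ H n p
  mono : ∀ {n m : ℕ} (p : Fin n → ℝ) (p' : Fin m → ℝ),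
    IsProbVec p → IsProbVec p' → Majorizes p p' → H n p ≤ H m p'
  additive : ∀ {n m : ℕ} (p : Fin n → ℝ) (q : Fin m → ℝ),
    IsProbVec p → IsProbVec q → H (n * m) (kron p q) = H n p + H m q
  normalized : H 2 (uniform 2) = Real.logb 2 2

/-- A monotone divergence: a `[0,∞]`-valued function on pairs of probability vectors of
equal finite dimension satisfying the data-processing inequality and `𝔻(1‖1) = 0`. -/
structure IsMonotoneDivergence (D : (n : ℕ) → (Fin n → ℝ) → (Fin n → ℝ) → ℝ≥0∞) : Prop where
  dpi : ∀ {n m : ℕ} (p q : Fin n → ℝ) (p' q' : Fin m → ℝ),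
    IsProbVec p → IsProbVec q → IsProbVec p' → IsProbVec q' →
    RelMaj p q p' q' → D m p' q' ≤ D n p q
  normalized : D 1 (fun _ => 1) (fun _ => 1) = 0

/-- A relative entropy: data-processing inequality, additivity for Kronecker products,
and the normalisation `𝔻(e₁‖u₂) = log 2` (binary logarithm). -/
structure IsRelativeEntropy (D : (n : ℕ) → (Fin n → ℝ) → (Fin n → ℝ) → ℝ≥0∞) : Prop where
  dpi : ∀ {n m : ℕ} (p q : Fin n → ℝ) (p' q' : Fin m → ℝ),
    IsProbVec p → IsProbVec q → IsProbVec p' → IsProbVec q' →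
    RelMaj p q p' q' → D m p' q' ≤ D n p q
  additive : ∀ {n m : ℕ} (p₁ q₁ : Fin n → ℝ) (p₂ q₂ : Fin m → ℝ),
    IsProbVec p₁ → IsProbVec q₁ → IsProbVec p₂ → IsProbVec q₂ →
    D (n * m) (kron p₁ p₂) (kron q₁ q₂) = D n p₁ q₁ + D m p₂ q₂
  normalized : D 2 ![1, 0] ![1/2, 1/2] = ENNReal.ofReal (Real.logb 2 2)

namespace Stmt13Aux
open Finset

variable {n m : ℕ}

lemma mps_le {p : Fin n → ℝ} {k : ℕ} {c : ℝ}
    (h : ∀ s : Finset (Fin n), s.card ≤ k → ∑ i ∈ s, p i ≤ c) :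
    maxPartialSum p k ≤ c := by
  apply csSup_le (Set.nonempty_of_mem
    (show (0:ℝ) ∈ {x | ∃ s : Finset (Fin n), s.card ≤ k ∧ ∑ i ∈ s, p i = x} from
      ⟨∅, by simp, by simp⟩))
  rintro x ⟨s, hs, rfl⟩
  exact h s hs

lemma sum_le_mps {p : Fin n → ℝ} (h0 : ∀ i, 0 ≤ p i) {s : Finset (Fin n)} {k : ℕ}
    (h : s.card ≤ k) : ∑ i ∈ s, p i ≤ maxPartialSum p k := by
  apply le_csSup _
    (show (∑ i ∈ s, p i) ∈ {x | ∃ t : Finset (Fin n), t.card ≤ k ∧ ∑ i ∈ t, p i = x} from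
      ⟨s, h, rfl⟩)
  refine ⟨∑ i, p i, ?_⟩
  rintro x ⟨t, _, rfl⟩
  exact Finset.sum_le_sum_of_subset_of_nonneg (subset_univ t) (fun i _ _ => h0 i)

lemma probVec_le_one {p : Fin n → ℝ} (hp : IsProbVec p) (i : Fin n) : p i ≤ 1 := by
  rw [← hp.2]
  exact Finset.single_le_sum (fun j _ => hp.1 j) (mem_univ i)

lemma probVec_pos_dim {p : Fin n → ℝ} (hp : IsProbVec p) : 0 < n := by
  by_contra h
  push_neg at h
  interval_cases n
  · simpa using hp.2

lemma probVec_sum_subset_le_one {p : Fin n → ℝ} (hp : IsProbVec p) (s : Finset (Fin n)) :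
    ∑ i ∈ s, p i ≤ 1 := by
  rw [← hp.2]
  exact Finset.sum_le_sum_of_subset_of_nonneg (subset_univ s) (fun i _ _ => hp.1 i)

lemma mps_le_one {p : Fin n → ℝ} (hp : IsProbVec p) (k : ℕ) : maxPartialSum p k ≤ 1 :=
  mps_le (fun s _ => probVec_sum_subset_le_one hp s)

lemma mps_mono {p : Fin n → ℝ} (h0 : ∀ i, 0 ≤ p i) {k l : ℕ} (h : k ≤ l) :
    maxPartialSum p k ≤ maxPartialSum p l :=
  mps_le (fun s hs => sum_le_mps h0 (hs.trans h))

/-- a subset of `Fin m` of any card `k ≤ m`. -/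
lemma exists_card_subset (k : ℕ) (h : k ≤ m) : ∃ s : Finset (Fin m), s.card = k :=
  (Finset.exists_subset_card_eq (show k ≤ (Finset.univ : Finset (Fin m)).card by simpa using h)).imp
    fun s hs => hs.2

lemma uniform_isProbVec (h : 0 < n) : IsProbVec (uniform n) := by
  have hn : (0:ℝ) < n := by exact_mod_cast h
  constructor
  · intro i; simp only [uniform]; positivity
  · simp only [uniform, Finset.sum_const, Finset.card_univ, Fintype.card_fin, nsmul_eq_mul]
    field_simp

lemma mps_uniform (h : 0 < n) (k : ℕ) :
    maxPartialSum (uniform n) k = (min k n : ℕ) / n := by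
  apply le_antisymm
  · apply mps_le
    intro s hs
    have hcard : (s.card : ℝ) ≤ (min k n : ℕ) := by
      exact_mod_cast le_min hs (by simpa using Finset.card_le_univ s)
    have hn : (0:ℝ) < n := by exact_mod_cast h
    simp only [uniform, Finset.sum_const, nsmul_eq_mul]
    rw [div_eq_mul_inv]
    gcongr
  · obtain ⟨s, hs⟩ := exists_card_subset (m := n) (min k n) (min_le_right _ _)
    have hn : (0:ℝ) < n := by exact_mod_cast h
    have := sum_le_mps (p := uniform n) (fun i => by simp only [uniform]; positivity) (k := k)
      (s := s) (by simp [hs, min_le_left k n])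
    simpa [uniform, hs, Finset.sum_const, nsmul_eq_mul, div_eq_mul_inv] using this


variable {n m : ℕ}

lemma sum_map_kron (p : Fin n → ℝ) (q : Fin m → ℝ) (T : Finset (Fin n × Fin m)) :
    ∑ x ∈ T.map finProdFinEquiv.toEmbedding, kron p q x = ∑ y ∈ T, p y.1 * q y.2 := by
  rw [Finset.sum_map]
  refine Finset.sum_congr rfl fun y _ => ?_
  simp [kron]

lemma map_symm_map (S : Finset (Fin (n * m))) :
    (S.map finProdFinEquiv.symm.toEmbedding).map finProdFinEquiv.toEmbedding = S := by
  rw [Finset.map_map]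
  ext x
  simp only [Finset.mem_map, Function.Embedding.trans_apply, Equiv.coe_toEmbedding,
    Equiv.symm_apply_eq, Equiv.coe_toEmbedding]
  constructor
  · rintro ⟨y, hy, rfl⟩
    rwa [Equiv.apply_symm_apply]
  · intro hx
    exact ⟨x, hx, by rw [Equiv.apply_symm_apply]⟩

lemma kron_nonneg {p : Fin n → ℝ} {q : Fin m → ℝ} (hp : ∀ i, 0 ≤ p i) (hq : ∀ j, 0 ≤ q j)
    (x : Fin (n * m)) : 0 ≤ kron p q x := mul_nonneg (hp _) (hq _)

lemma kron_isProbVec {p : Fin n → ℝ} {q : Fin m → ℝ} (hp : IsProbVec p) (hq : IsProbVec q) :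
    IsProbVec (kron p q) := by
  refine ⟨kron_nonneg hp.1 hq.1, ?_⟩
  have : ∑ x, kron p q x = ∑ y : Fin n × Fin m, p y.1 * q y.2 := by
    rw [← Equiv.sum_comp finProdFinEquiv (fun x => kron p q x)]
    refine Finset.sum_congr rfl fun y _ => ?_
    simp [kron]
  rw [this, Fintype.sum_prod_type]
  simp only [← Finset.sum_mul, ← Finset.mul_sum]
  rw [hp.2, hq.2, one_mul]

lemma fiber_card_le (T : Finset (Fin n × Fin m)) (i : Fin n) :
    (T.filter (fun y => y.1 = i)).card ≤ m := by
  classical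
  calc (T.filter (fun y => y.1 = i)).card
      ≤ (Finset.univ : Finset (Fin m)).card := by
        apply Finset.card_le_card_of_injOn (fun y => y.2) (fun y _ => mem_univ _)
        intro a ha b hb hab
        simp only [mem_coe, mem_filter] at ha hb
        exact Prod.ext (ha.2.trans hb.2.symm) hab
    _ = m := by simp

lemma sum_fiber_card (T : Finset (Fin n × Fin m)) :
    T.card = ∑ i, (T.filter (fun y => y.1 = i)).card :=
  Finset.card_eq_sum_card_fiberwise (fun x _ => mem_univ _)

lemma sum_fst_eq_fiber (T : Finset (Fin n × Fin m)) (f : Fin n → ℝ) :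
    ∑ y ∈ T, f y.1 = ∑ i, ((T.filter (fun y => y.1 = i)).card : ℝ) * f i := by
  rw [← Finset.sum_fiberwise_of_maps_to (fun (x : Fin n × Fin m) (_ : x ∈ T) =>
    mem_univ x.1) (fun y => f y.1)]
  refine Finset.sum_congr rfl fun i _ => ?_
  rw [Finset.sum_congr rfl (g := fun _ => f i) (fun y hy => by rw [(Finset.mem_filter.1 hy).2]),
    Finset.sum_const, nsmul_eq_mul]

lemma exists_card_subset' (k : ℕ) (h : k ≤ m) : ∃ s : Finset (Fin m), s.card = k :=
  (Finset.exists_subset_card_eq (show k ≤ (Finset.univ : Finset (Fin m)).card by simpa using h)).imp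
    fun s hs => hs.2

lemma exists_selection (P : Finset (Fin n)) (k : Fin n → ℕ) (hk : ∀ i ∈ P, k i ≤ m)
    (f : Fin n → ℝ) :
    ∃ T : Finset (Fin n × Fin m), T.card = ∑ i ∈ P, k i ∧
      ∑ y ∈ T, f y.1 = ∑ i ∈ P, (k i : ℝ) * f i := by
  classical
  have hC : ∀ i : Fin n, ∃ s : Finset (Fin m), s.card = min (k i) m :=
    fun i => exists_card_subset' _ (min_le_right _ _)
  choose C hCcard using hC
  have hCcard' : ∀ i ∈ P, (C i).card = k i := fun i hi => by
    rw [hCcard, min_eq_left (hk i hi)]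
  refine ⟨P.biUnion (fun i => ({i} : Finset (Fin n)) ×ˢ C i), ?_, ?_⟩
  · rw [Finset.card_biUnion]
    · exact Finset.sum_congr rfl fun i hi => by simp [hCcard' i hi]
    · intro a _ b _ hab
      simp only [Finset.disjoint_left, mem_product, mem_singleton]
      rintro ⟨y1, y2⟩ ⟨rfl, -⟩ ⟨h2, -⟩
      exact hab h2
  · rw [Finset.sum_biUnion]
    · refine Finset.sum_congr rfl fun i hi => ?_
      rw [Finset.sum_product]
      simp [hCcard' i hi, mul_comm]
    · intro a _ b hb hab
      simp only [Finset.disjoint_left, mem_product, mem_singleton]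
      rintro ⟨y1, y2⟩ ⟨rfl, -⟩ ⟨h2, -⟩
      exact hab h2


section Entropy
variable (H : (n : ℕ) → (Fin n → ℝ) → ℝ) (hH : IsEntropy H)
include hH

omit hH in
lemma uniform_one_eq : uniform 1 = fun _ : Fin 1 => (1 : ℝ) := by
  funext i; simp [uniform]

omit hH in
lemma kron_uniform_uniform (hn : 0 < n) (hm : 0 < m) :
    kron (uniform n) (uniform m) = uniform (n * m) := by
  funext x
  simp [kron, uniform, Nat.cast_mul, mul_inv, mul_comm]

lemma g_mul (hn : 0 < n) (hm : 0 < m) :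
    H (n * m) (uniform (n * m)) = H n (uniform n) + H m (uniform m) := by
  rw [← kron_uniform_uniform hn hm]
  exact hH.additive _ _ (uniform_isProbVec hn) (uniform_isProbVec hm)

omit hH in
lemma majorizes_uniform (hn : 0 < n) (hm : 0 < m) (hnm : n ≤ m) :
    Majorizes (uniform n) (uniform m) := by
  intro k
  rw [mps_uniform hn, mps_uniform hm]
  have hn' : (0:ℝ) < n := by exact_mod_cast hn
  have hm' : (0:ℝ) < m := by exact_mod_cast hm
  rcases le_or_gt k n with h | h
  · rw [min_eq_left h, min_eq_left (h.trans hnm)]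
    rw [div_le_div_iff₀ hm' hn']
    have hk0 : (0:ℝ) ≤ k := by positivity
    have hcast : (n:ℝ) ≤ m := by exact_mod_cast hnm
    nlinarith
  · rw [min_eq_right h.le, div_self (ne_of_gt hn')]
    rw [div_le_one hm']
    exact_mod_cast min_le_right k m

lemma g_one : H 1 (uniform 1) = 0 := by
  have h := g_mul H hH one_pos one_pos
  have h' : H 1 (uniform 1) = H 1 (uniform 1) + H 1 (uniform 1) := h
  linarith

lemma g_mono (hn : 0 < n) (hnm : n ≤ m) :
    H n (uniform n) ≤ H m (uniform m) :=
  hH.mono _ _ (uniform_isProbVec hn) (uniform_isProbVec (hn.trans_le hnm))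
    (majorizes_uniform hn (hn.trans_le hnm) hnm)

lemma g_two_pow (a : ℕ) : H (2 ^ a) (uniform (2 ^ a)) = a := by
  induction a with
  | zero => simpa using g_one H hH
  | succ a ih =>
      have h2 : (2:ℕ)^(a+1) = 2^a * 2 := by ring
      rw [h2, g_mul H hH (pow_pos two_pos a) two_pos, ih, hH.normalized,
        Real.logb_self_eq_one (by norm_num)]
      push_cast; ring

lemma g_pow (hn : 0 < n) (k : ℕ) :
    H (n ^ k) (uniform (n ^ k)) = k * H n (uniform n) := by
  induction k with
  | zero => simpa using g_one H hH
  | succ k ih =>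
      rw [pow_succ, g_mul H hH (pow_pos hn k) hn, ih]
      push_cast; ring

lemma g_eq (hn : 0 < n) : H n (uniform n) = Real.logb 2 n := by
  have key : ∀ k : ℕ, 0 < k → |H n (uniform n) - Real.logb 2 n| ≤ 1 / k := by
    intro k hk
    have hnk : (0:ℕ) < n ^ k := pow_pos hn k
    set a := Nat.log 2 (n ^ k) with ha
    have h1 : 2 ^ a ≤ n ^ k := Nat.pow_log_le_self 2 (hnk.ne')
    have h2 : n ^ k < 2 ^ (a + 1) := Nat.lt_pow_succ_log_self (by norm_num) _
    have e1 : (a : ℝ) ≤ k * H n (uniform n) := by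
      have := g_mono H hH (n := 2 ^ a) (m := n ^ k) (pow_pos two_pos a) h1
      rw [g_two_pow H hH, g_pow H hH hn] at this
      linarith
    have e2 : k * H n (uniform n) ≤ a + 1 := by
      have := g_mono H hH (n := n ^ k) (m := 2 ^ (a + 1)) hnk (le_of_lt h2)
      rw [g_two_pow H hH, g_pow H hH hn] at this
      push_cast at this ⊢
      linarith
    have c1 : ((2:ℝ) ^ a) ≤ (n:ℝ) ^ k := by exact_mod_cast h1
    have c2 : ((n:ℝ) ^ k) ≤ (2:ℝ) ^ (a + 1) := by exact_mod_cast le_of_lt h2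
    have hn' : (0:ℝ) < n := by exact_mod_cast hn
    have e3 : (a : ℝ) ≤ k * Real.logb 2 n := by
      have h := Real.logb_le_logb_of_le (b := 2) (by norm_num)
        (by positivity : (0:ℝ) < 2 ^ a) c1
      rw [Real.logb_pow, Real.logb_pow, Real.logb_self_eq_one (by norm_num)] at h
      linarith
    have e4 : k * Real.logb 2 n ≤ a + 1 := by
      have h := Real.logb_le_logb_of_le (b := 2) (by norm_num)
        (by positivity : (0:ℝ) < (n:ℝ) ^ k) c2
      rw [Real.logb_pow, Real.logb_pow, Real.logb_self_eq_one (by norm_num)] at h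
      push_cast at h ⊢
      linarith
    have habs : |k * H n (uniform n) - k * Real.logb 2 n| ≤ 1 := by
      rw [abs_le]; constructor <;> linarith
    have hk' : (0:ℝ) < k := by exact_mod_cast hk
    rw [← mul_sub, abs_mul, abs_of_pos hk'] at habs
    rw [le_div_iff₀ hk', mul_comm]
    exact habs
  by_contra hne
  have hpos : 0 < |H n (uniform n) - Real.logb 2 n| := abs_pos.2 (sub_ne_zero.2 hne)
  obtain ⟨k, hk⟩ := exists_nat_one_div_lt hpos
  have := key (k + 1) (Nat.succ_pos k)
  push_cast at this hk
  linarith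



omit hH in
lemma exists_subset_avg {p : Fin n → ℝ} (h0 : ∀ i, 0 ≤ p i) (T : Finset (Fin n)) :
    ∀ k, k ≤ T.card → ∃ S ⊆ T, S.card = k ∧
      (k : ℝ) * ∑ i ∈ T, p i ≤ (T.card : ℝ) * ∑ i ∈ S, p i := by
  intro k
  induction k with
  | zero => intro _; exact ⟨∅, Finset.empty_subset T, rfl, by simp⟩
  | succ k ih =>
      intro hk1
      obtain ⟨S, hST, hCard, hSum⟩ := ih (Nat.le_of_succ_le hk1)
      have hdiff : (T \ S).Nonempty := by
        rw [← Finset.card_pos, Finset.card_sdiff_of_subset hST, hCard]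
        omega
      obtain ⟨i, hi, hmax⟩ := Finset.exists_max_image (T \ S) p hdiff
      have hiT : i ∈ T := (Finset.mem_sdiff.1 hi).1
      have hiS : i ∉ S := (Finset.mem_sdiff.1 hi).2
      refine ⟨insert i S, Finset.insert_subset hiT hST, ?_, ?_⟩
      · rw [Finset.card_insert_of_notMem hiS, hCard]
      · rw [Finset.sum_insert hiS]
        set t : ℝ := (T.card : ℝ) with ht
        set sumT : ℝ := ∑ j ∈ T, p j
        set sumS : ℝ := ∑ j ∈ S, p j
        have hkle : k ≤ T.card := hCard ▸ Finset.card_le_card hST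
        have hcard_sd : ((T \ S).card : ℝ) = t - k := by
          rw [Finset.card_sdiff_of_subset hST, hCard, Nat.cast_sub hkle]
        have h1 : sumT - sumS ≤ (t - k) * p i := by
          have : ∑ j ∈ T \ S, p j ≤ ∑ j ∈ T \ S, p i :=
            Finset.sum_le_sum (fun j hj => hmax j hj)
          rw [Finset.sum_const, nsmul_eq_mul, hcard_sd] at this
          rwa [Finset.sum_sdiff_eq_sub hST] at this
        have htk : (0:ℝ) < t - k := by
          rw [ht]
          have : (k:ℝ) + 1 ≤ T.card := by exact_mod_cast hk1
          linarith
        have hsumT : 0 ≤ sumT := Finset.sum_nonneg (fun j _ => h0 j)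
        have hsumS : 0 ≤ sumS := Finset.sum_nonneg (fun j _ => h0 j)
        have htk1 : (0:ℝ) ≤ t - k - 1 := by
          have : (k:ℝ) + 1 ≤ t := by rw [ht]; exact_mod_cast hk1
          linarith
        have e1 : t * (sumT - sumS) ≤ t * ((t - k) * p i) :=
          mul_le_mul_of_nonneg_left h1 (by positivity)
        have e2 : (t - k - 1) * ((k:ℝ) * sumT) ≤ (t - k - 1) * (t * sumS) :=
          mul_le_mul_of_nonneg_left hSum htk1
        have key : 0 ≤ (t - k) * (t * (p i + sumS) - ((k:ℝ) + 1) * sumT) := by nlinarith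
        have := (mul_nonneg_iff_of_pos_left htk).1 key
        push_cast
        linarith

lemma H_kron_uniform {p : Fin n → ℝ} (hp : IsProbVec p) (hm : 0 < m) :
    H (n * m) (kron p (uniform m)) = H n p + Real.logb 2 m := by
  rw [hH.additive _ _ hp (uniform_isProbVec hm), g_eq H hH hm]

omit hH in
lemma supp_card_pos {p : Fin n → ℝ} (hp : IsProbVec p) :
    0 < (Finset.univ.filter (fun i => p i ≠ 0)).card ∧
      ∑ i ∈ Finset.univ.filter (fun i => p i ≠ 0), p i = 1 := by
  classical
  have hsum : ∑ i ∈ Finset.univ.filter (fun i => p i ≠ 0), p i = 1 := by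
    rw [Finset.sum_filter_ne_zero, hp.2]
  refine ⟨?_, hsum⟩
  by_contra h
  push_neg at h
  interval_cases hc : (Finset.univ.filter (fun i => p i ≠ 0)).card
  rw [Finset.card_eq_zero.1 hc] at hsum
  simpa using hsum

omit hH in
lemma majorizes_supp {p : Fin n → ℝ} (hp : IsProbVec p) :
    Majorizes p (uniform (Finset.univ.filter (fun i => p i ≠ 0)).card) := by
  classical
  set P := Finset.univ.filter (fun i => p i ≠ 0) with hP
  obtain ⟨hs, hsum⟩ := supp_card_pos hp
  intro k
  rw [mps_uniform hs]
  obtain ⟨S, hST, hCard, hSum⟩ := exists_subset_avg hp.1 P (min k P.card) (min_le_right _ _)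
  have hs' : (0:ℝ) < P.card := by exact_mod_cast hs
  have : ((min k P.card : ℕ) : ℝ) / P.card ≤ ∑ i ∈ S, p i := by
    rw [div_le_iff₀ hs']
    rw [hsum] at hSum
    linarith [hSum]
  exact this.trans (sum_le_mps hp.1 (le_trans (le_of_eq hCard) (min_le_left _ _)))

lemma H_le_log_supp {p : Fin n → ℝ} (hp : IsProbVec p) :
    H n p ≤ Real.logb 2 ((Finset.univ.filter (fun i => p i ≠ 0)).card) := by
  obtain ⟨hs, -⟩ := supp_card_pos hp
  calc H n p ≤ H _ (uniform _) :=
        hH.mono _ _ hp (uniform_isProbVec hs) (majorizes_supp hp)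
    _ = _ := g_eq H hH hs

end Entropy

noncomputable def iterDim (n : ℕ) : ℕ → ℕ
  | 0 => 1
  | k + 1 => n * iterDim n k

noncomputable def iterKron {n : ℕ} (p : Fin n → ℝ) : (k : ℕ) → Fin (iterDim n k) → ℝ
  | 0 => fun _ => 1
  | k + 1 => kron p (iterKron p k)

section IterFacts
variable {n : ℕ} {p : Fin n → ℝ}

lemma iterKron_probVec (hp : IsProbVec p) (k : ℕ) : IsProbVec (iterKron p k) := by
  induction k with
  | zero =>
      constructor
      · intro i; norm_num [iterKron]
      · simp [iterKron, iterDim]; exact Finset.card_fin _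
  | succ k ih => exact kron_isProbVec hp ih

lemma iterKron_le {t : ℝ} (hp : IsProbVec p) (ht : ∀ i, p i ≤ t) (ht0 : 0 ≤ t) (k : ℕ) :
    ∀ x, iterKron p k x ≤ t ^ k := by
  induction k with
  | zero => intro x; simp [iterKron]
  | succ k ih =>
      intro x
      have h1 : (0:ℝ) ≤ iterKron p k (finProdFinEquiv.symm x).2 :=
        (iterKron_probVec hp k).1 _
      calc iterKron p (k+1) x = p _ * iterKron p k _ := rfl
        _ ≤ t * t ^ k := by
            exact mul_le_mul (ht _) (ih _) h1 ht0
        _ = t ^ (k+1) := by ring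

end IterFacts

section Entropy2
variable (H : (n : ℕ) → (Fin n → ℝ) → ℝ) (hH : IsEntropy H) {n : ℕ}
include hH

lemma H_iterKron {p : Fin n → ℝ} (hp : IsProbVec p) (k : ℕ) :
    H (iterDim n k) (iterKron p k) = k * H n p := by
  induction k with
  | zero =>
      have h0 : H (iterDim n 0) (iterKron p 0) = H 1 (fun _ => (1:ℝ)) := rfl
      have h1 : (fun _ : Fin 1 => (1:ℝ)) = uniform 1 := by
        funext i; simp [uniform]
      rw [h0, h1, g_one H hH]
      simp
  | succ k ih =>
      have h2 : H (iterDim n (k+1)) (iterKron p (k+1))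
          = H (n * iterDim n k) (kron p (iterKron p k)) := rfl
      rw [h2, hH.additive _ _ hp (iterKron_probVec hp k), ih]
      push_cast; ring

lemma H_ge_neg_log_max {p : Fin n → ℝ} (hp : IsProbVec p) :
    -(Real.logb 2 (sSup { x | ∃ i, x = p i })) ≤ H n p := by
  classical
  have hn : 0 < n := probVec_pos_dim hp
  set t := sSup { x | ∃ i, x = p i } with htdef
  have hfin : ({ x | ∃ i, x = p i } : Set ℝ).Finite := by
    have : { x | ∃ i, x = p i } = Set.range p := by
      ext x; simp [eq_comm]
    rw [this]; exact Set.finite_range p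
  have hne : ({ x | ∃ i, x = p i } : Set ℝ).Nonempty :=
    ⟨p ⟨0, hn⟩, ⟨⟨0, hn⟩, rfl⟩⟩
  have htmem : t ∈ { x | ∃ i, x = p i } := hne.csSup_mem hfin
  have hle : ∀ i, p i ≤ t := fun i => le_csSup (hfin.bddAbove) ⟨i, rfl⟩
  obtain ⟨i₀, hi₀⟩ := htmem
  have ht1 : t ≤ 1 := hi₀ ▸ probVec_le_one hp i₀
  have ht0 : 0 < t := by
    rcases lt_or_ge 0 t with h | h
    · exact h
    · exfalso
      have hz : ∀ i, p i = 0 := fun i => le_antisymm ((hle i).trans h) (hp.1 i)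
      have h2 := hp.2
      rw [Finset.sum_congr rfl (fun i _ => hz i)] at h2
      simpa using h2
  have hinv1 : 1 ≤ t⁻¹ := (one_le_inv₀ ht0).2 ht1
  have key : ∀ k : ℕ, 0 < k → -(Real.logb 2 t) - H n p ≤ 1 / k := by
    intro k hk
    set M := ⌊t⁻¹ ^ k⌋₊ with hM
    have hMpos : 1 ≤ M := by
      apply Nat.le_floor
      simpa using one_le_pow₀ hinv1
    have hM0 : 0 < M := hMpos
    have hMr : (0:ℝ) < M := by exact_mod_cast hM0
    have hMle : (M:ℝ) ≤ t⁻¹ ^ k := Nat.floor_le (by positivity)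
    have hMgt : t⁻¹ ^ k < M + 1 := Nat.lt_floor_add_one _
    have htk : (0:ℝ) < t ^ k := by positivity
    have htkM : t ^ k ≤ 1 / M := by
      rw [le_div_iff₀ hMr]
      have h1 : (M:ℝ) * t ^ k ≤ t⁻¹ ^ k * t ^ k :=
        mul_le_mul_of_nonneg_right hMle htk.le
      have h2 : t⁻¹ ^ k * t ^ k = 1 := by
        rw [← mul_pow, inv_mul_cancel₀ ht0.ne', one_pow]
      rw [h2] at h1
      linarith [h1]
    have maj : Majorizes (uniform M) (iterKron p k) := by
      intro j
      rw [mps_uniform hM0]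
      apply mps_le
      intro s hs
      rcases le_or_gt j M with hjM | hjM
      · rw [min_eq_left hjM]
        have h1 : ∑ x ∈ s, iterKron p k x ≤ (s.card : ℝ) * t ^ k := by
          calc ∑ x ∈ s, iterKron p k x ≤ ∑ _x ∈ s, t ^ k :=
                Finset.sum_le_sum (fun x _ => iterKron_le hp hle ht0.le k x)
            _ = s.card * t ^ k := by rw [Finset.sum_const, nsmul_eq_mul]
        have hcard : (s.card : ℝ) ≤ j := by exact_mod_cast hs
        calc ∑ x ∈ s, iterKron p k x ≤ (s.card : ℝ) * t ^ k := h1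
          _ ≤ (j:ℝ) * t ^ k := mul_le_mul_of_nonneg_right hcard htk.le
          _ ≤ (j:ℝ) * (1 / M) := mul_le_mul_of_nonneg_left htkM (by positivity)
          _ = (j:ℝ) / M := by ring
      · rw [min_eq_right hjM.le, div_self hMr.ne']
        exact probVec_sum_subset_le_one (iterKron_probVec hp k) s
    have hmono := hH.mono _ _ (uniform_isProbVec hM0) (iterKron_probVec hp k) maj
    rw [g_eq H hH hM0, H_iterKron H hH hp k] at hmono
    have hlog : (k:ℝ) * -(Real.logb 2 t) - 1 ≤ Real.logb 2 M := by
      have h2M : t⁻¹ ^ k ≤ 2 * M := by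
        have h1 : (1:ℝ) ≤ M := by exact_mod_cast hMpos
        linarith [hMgt.le]
      have hlog1 := Real.logb_le_logb_of_le (b := 2) (by norm_num)
        (by positivity : (0:ℝ) < t⁻¹ ^ k) h2M
      rw [Real.logb_pow, Real.logb_inv, Real.logb_mul (by norm_num) hMr.ne',
        Real.logb_self_eq_one (by norm_num)] at hlog1
      linarith
    have hk' : (0:ℝ) < k := by exact_mod_cast hk
    rw [le_div_iff₀ hk']
    nlinarith [hlog, hmono]
  have hfinal : -(Real.logb 2 t) - H n p ≤ 0 := by
    by_contra h
    push_neg at h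
    obtain ⟨k, hk⟩ := exists_nat_one_div_lt h
    have := key (k+1) (Nat.succ_pos k)
    push_cast at this hk
    linarith
  linarith

end Entropy2

section KeyMaj
variable {n : ℕ}

lemma exists_fill {ι : Type*} [DecidableEq ι] (P : Finset ι) (m : ℕ) :
    ∀ (d : ℕ) (k0 : ι → ℕ), (∀ i ∈ P, k0 i ≤ m) → ∀ j, (∑ i ∈ P, k0 i) + d = j →
    j ≤ P.card * m →
    ∃ kk : ι → ℕ, (∀ i ∈ P, k0 i ≤ kk i ∧ kk i ≤ m) ∧ ∑ i ∈ P, kk i = j := by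
  intro d
  induction d with
  | zero =>
      intro k0 hk0 j hj _
      exact ⟨k0, fun i hi => ⟨le_refl _, hk0 i hi⟩, by omega⟩
  | succ d ih =>
      intro k0 hk0 j hj hcap
      have hconst : ∑ _i ∈ P, m = P.card * m := by rw [Finset.sum_const, smul_eq_mul]
      have hlt : ∑ i ∈ P, k0 i < ∑ _i ∈ P, m := by omega
      obtain ⟨i, hiP, hi⟩ := Finset.exists_lt_of_sum_lt hlt
      obtain ⟨kk, h1, h2⟩ := ih (Function.update k0 i (k0 i + 1))
        (fun i' hi' => by
          rcases eq_or_ne i' i with rfl | hne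
          · rw [Function.update_self]; omega
          · rw [Function.update_of_ne hne]; exact hk0 i' hi')
        j (by
          rw [Finset.sum_update_of_mem hiP, Finset.sdiff_singleton_eq_erase]
          have := Finset.add_sum_erase P k0 hiP
          omega)
        hcap
      refine ⟨kk, fun i' hi' => ⟨?_, (h1 i' hi').2⟩, h2⟩
      rcases eq_or_ne i' i with rfl | hne
      · have := (h1 i' hi').1; rw [Function.update_self] at this; omega
      · have := (h1 i' hi').1; rwa [Function.update_of_ne hne] at this

set_option maxHeartbeats 1000000 in
lemma key_majorizes {p q : Fin n → ℝ} (hp : IsProbVec p) (hq : IsProbVec q)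
    {c c' μ : ℝ} (hc1 : 1 ≤ c) (hcc' : c ≤ c')
    (hpq : ∀ i, p i ≤ c * q i) (i₀ : Fin n) (hmax : ∀ i, q i ≤ c * p i₀)
    (hμ : ∀ i, p i ≠ 0 → μ ≤ p i) (hμ0 : 0 < μ)
    {m m' : ℕ} (hm0 : 0 < m) (hm'c : c' * m ≤ m')
    (hgap : (1 - 1/c) * m ≤ μ * ((1 - 1/c') * m - n)) :
    Majorizes (kron p (uniform m)) (kron q (uniform m')) := by
  classical
  have hc0 : (0:ℝ) < c := lt_of_lt_of_le one_pos hc1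
  have hc'1 : (1:ℝ) ≤ c' := hc1.trans hcc'
  have hc'0 : (0:ℝ) < c' := lt_of_lt_of_le one_pos hc'1
  have hmr : (0:ℝ) < m := by exact_mod_cast hm0
  have hm'r : (0:ℝ) < m' := lt_of_lt_of_le (by positivity) hm'c
  have hm'0 : 0 < m' := by exact_mod_cast hm'r
  have hpn : ∀ i, 0 ≤ p i := hp.1
  have hqn : ∀ i, 0 ≤ q i := hq.1
  have hic : 0 ≤ 1 - 1/c := by
    have : 1/c ≤ 1 := by rw [div_le_one hc0]; exact hc1
    linarith
  have hic' : 0 ≤ 1 - 1/c' := by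
    have : 1/c' ≤ 1 := by rw [div_le_one hc'0]; exact hc'1
    linarith
  have hmn : (n:ℝ) ≤ (1 - 1/c') * m := by nlinarith [mul_nonneg hic hmr.le]
  intro k
  apply mps_le
  intro S hSk
  set T := S.map finProdFinEquiv.symm.toEmbedding with hT
  have hsum0 : ∑ x ∈ S, kron q (uniform m') x = ∑ y ∈ T, q y.1 * (m' : ℝ)⁻¹ := by
    conv_lhs => rw [← map_symm_map S]
    rw [sum_map_kron]
    rfl
  have hcardT : T.card = S.card := Finset.card_map _
  set j := S.card with hj
  have hjk : j ≤ k := hSk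
  have hkron_nonneg : ∀ x, 0 ≤ kron p (uniform m) x :=
    kron_nonneg hpn (fun _ => by simp only [uniform]; positivity)
  rcases le_or_gt j m with hjm | hjm
  · -- Regime I : j ≤ m
    have hbound : ∑ x ∈ S, kron q (uniform m') x ≤ (j:ℝ) * (c * p i₀) * (m':ℝ)⁻¹ := by
      rw [hsum0]
      calc ∑ y ∈ T, q y.1 * (m':ℝ)⁻¹ ≤ ∑ _y ∈ T, (c * p i₀) * (m':ℝ)⁻¹ :=
            Finset.sum_le_sum fun y _ => mul_le_mul_of_nonneg_right (hmax _) (by positivity)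
        _ = (j:ℝ) * (c * p i₀) * (m':ℝ)⁻¹ := by
            rw [Finset.sum_const, hcardT, nsmul_eq_mul]; ring
    obtain ⟨T', hT'card, hT'sum⟩ := exists_selection ({i₀} : Finset (Fin n)) (fun _ => j)
      (fun i _ => hjm) (fun i => p i * (m:ℝ)⁻¹)
    have hsum' : ∑ x ∈ T'.map finProdFinEquiv.toEmbedding, kron p (uniform m) x
        = (j:ℝ) * (p i₀ * (m:ℝ)⁻¹) := by
      rw [sum_map_kron]
      calc ∑ y ∈ T', p y.1 * uniform m y.2 = ∑ y ∈ T', (fun i => p i * (m:ℝ)⁻¹) y.1 := rfl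
        _ = ∑ i ∈ ({i₀} : Finset (Fin n)), ((j:ℕ):ℝ) * (p i * (m:ℝ)⁻¹) := hT'sum
        _ = (j:ℝ) * (p i₀ * (m:ℝ)⁻¹) := by rw [Finset.sum_singleton]
    have hmid : (j:ℝ) * (c * p i₀) * (m':ℝ)⁻¹ ≤ (j:ℝ) * (p i₀ * (m:ℝ)⁻¹) := by
      have hcm : c * (m':ℝ)⁻¹ ≤ (m:ℝ)⁻¹ := by
        rw [← div_eq_mul_inv, show (m:ℝ)⁻¹ = 1/(m:ℝ) from (one_div _).symm,
          div_le_div_iff₀ hm'r hmr]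
        nlinarith
      calc (j:ℝ) * (c * p i₀) * (m':ℝ)⁻¹ = ((j:ℝ) * p i₀) * (c * (m':ℝ)⁻¹) := by ring
        _ ≤ ((j:ℝ) * p i₀) * (m:ℝ)⁻¹ := by
            exact mul_le_mul_of_nonneg_left hcm (mul_nonneg (by positivity) (hpn i₀))
        _ = (j:ℝ) * (p i₀ * (m:ℝ)⁻¹) := by ring
    refine hbound.trans (hmid.trans ?_)
    rw [← hsum']
    apply sum_le_mps hkron_nonneg
    rw [Finset.card_map, hT'card]
    simpa using hjk
  · -- Regime II : j > m
    set jf : Fin n → ℕ := fun i => (T.filter (fun y => y.1 = i)).card with hjf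
    have hjfsum : ∑ i, jf i = j := by rw [← hcardT]; exact (sum_fiber_card T).symm
    have hjfle : ∀ i, jf i ≤ m' := fun i => fiber_card_le T i
    have hjfler : ∀ i, (jf i:ℝ) ≤ m' := fun i => by exact_mod_cast hjfle i
    have hsum1 : ∑ x ∈ S, kron q (uniform m') x = ∑ i, (jf i : ℝ) * (q i * (m':ℝ)⁻¹) :=
      hsum0.trans (sum_fst_eq_fiber T (fun i => q i * (m':ℝ)⁻¹))
    set W := ∑ i, (jf i : ℝ) * (p i * (m':ℝ)⁻¹) with hW
    have hW0 : 0 ≤ W := Finset.sum_nonneg fun i _ =>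
      mul_nonneg (by positivity) (mul_nonneg (hpn i) (by positivity))
    have hW1 : W ≤ 1 := by
      calc W ≤ ∑ i, (m' : ℝ) * (p i * (m':ℝ)⁻¹) := Finset.sum_le_sum fun i _ =>
            mul_le_mul_of_nonneg_right (hjfler i) (mul_nonneg (hpn i) (by positivity))
        _ = ∑ i, p i := Finset.sum_congr rfl fun i _ => by field_simp
        _ = 1 := hp.2
    have hupper : ∑ x ∈ S, kron q (uniform m') x ≤ 1 - (1/c) * (1 - W) := by
      rw [hsum1]
      have e2 : ∑ i, (jf i:ℝ) * (q i * (m':ℝ)⁻¹)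
          = 1 - ∑ i, ((m':ℝ) - jf i) * (q i * (m':ℝ)⁻¹) := by
        rw [eq_sub_iff_add_eq, ← Finset.sum_add_distrib, ← hq.2]
        apply Finset.sum_congr rfl
        intro i _
        field_simp
        ring
      have e3 : ∑ i, ((m':ℝ) - jf i) * (p i * (m':ℝ)⁻¹) = 1 - W := by
        rw [eq_sub_iff_add_eq, hW, ← Finset.sum_add_distrib, ← hp.2]
        apply Finset.sum_congr rfl
        intro i _
        field_simp
        ring
      have e4 : (1/c) * (1 - W) ≤ ∑ i, ((m':ℝ) - jf i) * (q i * (m':ℝ)⁻¹) := by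
        rw [← e3, Finset.mul_sum]
        apply Finset.sum_le_sum
        intro i _
        have hpc : (1/c) * p i ≤ q i := by
          rw [div_mul_eq_mul_div, div_le_iff₀ hc0]
          calc 1 * p i = p i := one_mul _
            _ ≤ c * q i := hpq i
            _ = q i * c := mul_comm _ _
        have hfac : 0 ≤ (m':ℝ) - jf i := by linarith [hjfler i]
        calc (1/c) * (((m':ℝ) - jf i) * (p i * (m':ℝ)⁻¹))
            = ((m':ℝ) - jf i) * ((1/c * p i) * (m':ℝ)⁻¹) := by ring
          _ ≤ ((m':ℝ) - jf i) * (q i * (m':ℝ)⁻¹) := by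
              apply mul_le_mul_of_nonneg_left _ hfac
              exact mul_le_mul_of_nonneg_right hpc (by positivity)
      rw [e2]
      linarith
    set P := Finset.univ.filter (fun i => p i ≠ 0) with hPdef
    obtain ⟨hs0, hsumP⟩ := supp_card_pos hp
    have hsn : P.card ≤ n := by
      calc P.card ≤ (Finset.univ : Finset (Fin n)).card := Finset.card_filter_le _ _
        _ = n := by simp
    rcases le_or_gt (P.card * m) j with hcase | hcase
    · -- Case A : full support selection
      obtain ⟨T', hT'card, hT'sum⟩ := exists_selection P (fun _ => m) (fun i _ => le_refl m)
        (fun i => p i * (m:ℝ)⁻¹)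
      have hT'card' : T'.card = P.card * m := by
        rw [hT'card, Finset.sum_const, smul_eq_mul]
      have hV : ∑ x ∈ T'.map finProdFinEquiv.toEmbedding, kron p (uniform m) x = 1 := by
        rw [sum_map_kron]
        calc ∑ y ∈ T', p y.1 * uniform m y.2 = ∑ y ∈ T', (fun i => p i * (m:ℝ)⁻¹) y.1 := rfl
          _ = ∑ i ∈ P, ((m:ℕ):ℝ) * (p i * (m:ℝ)⁻¹) := hT'sum
          _ = ∑ i ∈ P, p i := Finset.sum_congr rfl fun i _ => by field_simp
          _ = 1 := hsumP
      refine le_trans (probVec_sum_subset_le_one (kron_isProbVec hq (uniform_isProbVec hm'0)) S) ?_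
      rw [← hV]
      apply sum_le_mps hkron_nonneg
      rw [Finset.card_map, hT'card']
      omega
    · -- Case B : partial selection plus filling
      set k0 : Fin n → ℕ := fun i => min m (jf i * m / m' + 1) with hk0def
      have hk0le : ∀ i, k0 i ≤ m := fun i => min_le_left _ _
      have hk0val : ∀ i, (jf i : ℝ) * (p i * (m':ℝ)⁻¹) ≤ (k0 i : ℝ) * (p i * (m:ℝ)⁻¹) := by
        intro i
        have hnat : jf i * m ≤ k0 i * m' := by
          rcases le_or_gt m (jf i * m / m' + 1) with hge | hlt
          · have hk0eq : k0 i = m := min_eq_left hge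
            rw [hk0eq]
            calc jf i * m ≤ m' * m := Nat.mul_le_mul_right _ (hjfle i)
              _ = m * m' := Nat.mul_comm _ _
          · have hk0eq : k0 i = jf i * m / m' + 1 := min_eq_right hlt.le
            rw [hk0eq]
            have h1 := Nat.lt_div_mul_add (a := jf i * m) (b := m') hm'0
            have h2 : (jf i * m / m' + 1) * m' = (jf i * m / m') * m' + m' := by ring
            omega
        have h1 : (jf i:ℝ) * m ≤ (k0 i:ℝ) * m' := by exact_mod_cast hnat
        have h2 : (jf i:ℝ) * (m':ℝ)⁻¹ ≤ (k0 i:ℝ) * (m:ℝ)⁻¹ := by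
          rw [← div_eq_mul_inv, ← div_eq_mul_inv, div_le_div_iff₀ hm'r hmr]
          linarith
        calc (jf i:ℝ) * (p i * (m':ℝ)⁻¹) = p i * ((jf i:ℝ) * (m':ℝ)⁻¹) := by ring
          _ ≤ p i * ((k0 i:ℝ) * (m:ℝ)⁻¹) := mul_le_mul_of_nonneg_left h2 (hpn i)
          _ = (k0 i:ℝ) * (p i * (m:ℝ)⁻¹) := by ring
      have hk0r : ∀ i, (k0 i : ℝ) ≤ (jf i:ℝ) * m / m' + 1 := by
        intro i
        have hmin : k0 i ≤ jf i * m / m' + 1 := min_le_right _ _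
        have h2 : ((jf i * m / m' : ℕ):ℝ) ≤ ((jf i * m : ℕ):ℝ) / (m':ℝ) := Nat.cast_div_le
        push_cast at h2
        calc (k0 i:ℝ) ≤ ((jf i * m / m' : ℕ):ℝ) + 1 := by exact_mod_cast hmin
          _ ≤ (jf i:ℝ) * m / m' + 1 := by linarith
      have hjfsumP : ∑ i ∈ P, (jf i:ℝ) ≤ (j:ℝ) := by
        have h1 : ∑ i ∈ P, jf i ≤ ∑ i, jf i :=
          Finset.sum_le_sum_of_subset (Finset.subset_univ P)
        rw [hjfsum] at h1
        exact_mod_cast h1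
      have hjreal : (m:ℝ) / m' ≤ 1/c' := by
        rw [div_le_div_iff₀ hm'r hc'0]
        nlinarith
      have hsum_k0 : (∑ i ∈ P, (k0 i:ℝ)) ≤ (1/c') * j + P.card := by
        calc ∑ i ∈ P, (k0 i:ℝ) ≤ ∑ i ∈ P, ((jf i:ℝ) * m / m' + 1) :=
              Finset.sum_le_sum fun i _ => hk0r i
          _ = (m/m') * (∑ i ∈ P, (jf i:ℝ)) + P.card := by
              rw [Finset.sum_add_distrib, Finset.sum_const, nsmul_eq_mul, mul_one,
                Finset.mul_sum]
              congr 1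
              apply Finset.sum_congr rfl
              intro i _
              ring
          _ ≤ (m/m') * j + P.card := by
              have h0 : (0:ℝ) ≤ m/m' := by positivity
              have := mul_le_mul_of_nonneg_left hjfsumP h0
              linarith
          _ ≤ (1/c') * j + P.card := by
              have hj0 : (0:ℝ) ≤ j := by positivity
              have := mul_le_mul_of_nonneg_right hjreal hj0
              linarith
      have hjb : (P.card:ℝ) ≤ (1 - 1/c') * j := by
        have h1 : (m:ℝ) ≤ j := by
          have : m ≤ j := hjm.le
          exact_mod_cast this
        have h2 : (P.card:ℝ) ≤ n := by exact_mod_cast hsn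
        nlinarith
      have hk0j : ∑ i ∈ P, k0 i ≤ j := by
        have hr : (∑ i ∈ P, (k0 i:ℝ)) ≤ (j:ℝ) := by linarith
        have : ((∑ i ∈ P, k0 i : ℕ):ℝ) ≤ (j:ℝ) := by push_cast; exact hr
        exact_mod_cast this
      obtain ⟨kk, hkk1, hkk2⟩ := exists_fill P m (j - ∑ i ∈ P, k0 i) k0
        (fun i hi => hk0le i) j (by omega) (by omega)
      obtain ⟨T', hT'card, hT'sum⟩ := exists_selection P kk (fun i hi => (hkk1 i hi).2)
        (fun i => p i * (m:ℝ)⁻¹)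
      have hWP : W = ∑ i ∈ P, (jf i : ℝ) * (p i * (m':ℝ)⁻¹) := by
        rw [hW]
        symm
        apply Finset.sum_subset (Finset.subset_univ P)
        intro i _ hiP
        have : p i = 0 := by
          by_contra hne
          exact hiP (Finset.mem_filter.2 ⟨Finset.mem_univ i, hne⟩)
        rw [this]
        ring
      have hFsum : ∑ i ∈ P, ((kk i:ℝ) - k0 i) = (j:ℝ) - ∑ i ∈ P, (k0 i:ℝ) := by
        rw [Finset.sum_sub_distrib]
        congr 1
        rw [← Nat.cast_sum]
        exact_mod_cast congrArg (Nat.cast : ℕ → ℝ) hkk2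
      have hF1 : (1 - 1/c') * m - n ≤ (j:ℝ) - ∑ i ∈ P, (k0 i:ℝ) := by
        have h1 : (m:ℝ) ≤ j := by exact_mod_cast hjm.le
        have h2 : (P.card:ℝ) ≤ n := by exact_mod_cast hsn
        nlinarith
      have hFb : (1 - 1/c) ≤ ((j:ℝ) - ∑ i ∈ P, (k0 i:ℝ)) * (μ / m) := by
        have h4 : (1 - 1/c) * m ≤ μ * ((j:ℝ) - ∑ i ∈ P, (k0 i:ℝ)) :=
          le_trans hgap (mul_le_mul_of_nonneg_left hF1 hμ0.le)
        rw [← sub_nonneg]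
        have expand : ((j:ℝ) - ∑ i ∈ P, (k0 i:ℝ)) * (μ / m) - (1 - 1/c)
            = (μ * ((j:ℝ) - ∑ i ∈ P, (k0 i:ℝ)) - (1 - 1/c) * m) / m := by
          field_simp
        rw [expand]
        exact div_nonneg (by linarith) hmr.le
      have hV : W + (1 - 1/c) ≤ ∑ i ∈ P, (kk i:ℝ) * (p i * (m:ℝ)⁻¹) := by
        have hterm : ∀ i ∈ P, (jf i:ℝ) * (p i * (m':ℝ)⁻¹) + ((kk i:ℝ) - k0 i) * (μ / m)
            ≤ (kk i:ℝ) * (p i * (m:ℝ)⁻¹) := by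
          intro i hiP
          have hpi : μ ≤ p i := hμ i (Finset.mem_filter.1 hiP).2
          have hd : (0:ℝ) ≤ (kk i:ℝ) - k0 i := by
            have h := (hkk1 i hiP).1
            have h' : (k0 i:ℝ) ≤ kk i := by exact_mod_cast h
            linarith
          have e1 : ((kk i:ℝ) - k0 i) * (μ / m) ≤ ((kk i:ℝ) - k0 i) * (p i / m) := by
            apply mul_le_mul_of_nonneg_left _ hd
            gcongr
          have e2 := hk0val i
          have hdist : (kk i:ℝ) * (p i * (m:ℝ)⁻¹)
              = (k0 i:ℝ) * (p i * (m:ℝ)⁻¹) + ((kk i:ℝ) - k0 i) * (p i / m) := by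
            field_simp
            ring
          rw [hdist]
          linarith
        calc W + (1 - 1/c)
            ≤ (∑ i ∈ P, (jf i:ℝ) * (p i * (m':ℝ)⁻¹))
              + (∑ i ∈ P, ((kk i:ℝ) - k0 i)) * (μ / m) := by
              rw [← hWP, hFsum]
              linarith
          _ = ∑ i ∈ P, ((jf i:ℝ) * (p i * (m':ℝ)⁻¹) + ((kk i:ℝ) - k0 i) * (μ / m)) := by
              rw [Finset.sum_add_distrib, Finset.sum_mul]
          _ ≤ ∑ i ∈ P, (kk i:ℝ) * (p i * (m:ℝ)⁻¹) := Finset.sum_le_sum hterm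
      have hVsum : ∑ x ∈ T'.map finProdFinEquiv.toEmbedding, kron p (uniform m) x
          = ∑ i ∈ P, (kk i:ℝ) * (p i * (m:ℝ)⁻¹) := by
        rw [sum_map_kron]
        calc ∑ y ∈ T', p y.1 * uniform m y.2 = ∑ y ∈ T', (fun i => p i * (m:ℝ)⁻¹) y.1 := rfl
          _ = ∑ i ∈ P, ((kk i:ℕ):ℝ) * (p i * (m:ℝ)⁻¹) := hT'sum
      have hfinal2 : 1 - (1/c) * (1 - W) ≤ W + (1 - 1/c) := by nlinarith
      calc ∑ x ∈ S, kron q (uniform m') x ≤ 1 - (1/c) * (1 - W) := hupper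
        _ ≤ W + (1 - 1/c) := hfinal2
        _ ≤ ∑ i ∈ P, (kk i:ℝ) * (p i * (m:ℝ)⁻¹) := hV
        _ ≤ maxPartialSum (kron p (uniform m)) k := by
            rw [← hVsum]
            apply sum_le_mps hkron_nonneg
            rw [Finset.card_map, hT'card, hkk2]
            exact hjk

end KeyMaj

section Entropy3
variable (H : (n : ℕ) → (Fin n → ℝ) → ℝ) (hH : IsEntropy H) {n : ℕ}
include hH

set_option maxHeartbeats 1000000 in
lemma key_entropy {p q : Fin n → ℝ} (hp : IsProbVec p) (hq : IsProbVec q)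
    {c c' μ : ℝ} (hc1 : 1 ≤ c) (hcc' : c ≤ c')
    (hpq : ∀ i, p i ≤ c * q i) (i₀ : Fin n) (hmax : ∀ i, q i ≤ c * p i₀)
    (hμ : ∀ i, p i ≠ 0 → μ ≤ p i) (hμ0 : 0 < μ)
    (hgap : (1 - 1/c) < μ * (1 - 1/c')) :
    H n p ≤ H n q + Real.logb 2 c' := by
  have hc0 : (0:ℝ) < c := lt_of_lt_of_le one_pos hc1
  have hc'1 : (1:ℝ) ≤ c' := hc1.trans hcc'
  have hc'0 : (0:ℝ) < c' := lt_of_lt_of_le one_pos hc'1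
  have hic : 0 ≤ 1 - 1/c := by
    have : 1/c ≤ 1 := by rw [div_le_one hc0]; exact hc1
    linarith
  have gap0 : 0 < μ * (1 - 1/c') - (1 - 1/c) := by linarith
  apply le_of_forall_pos_le_add
  intro ε hε
  have h2e : (1:ℝ) < (2:ℝ) ^ (ε : ℝ) := by
    rw [Real.one_lt_rpow_iff_of_pos (by norm_num)]
    left
    exact ⟨by norm_num, hε⟩
  obtain ⟨m, hm⟩ := exists_nat_ge (max (max
    ((μ * n + 1) / (μ * (1 - 1/c') - (1 - 1/c))) (1 / (c' * ((2:ℝ)^(ε:ℝ) - 1)))) 1)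
  have hm1 : (1:ℝ) ≤ m := le_trans (le_max_right _ _) hm
  have hm0 : 0 < m := by exact_mod_cast lt_of_lt_of_le one_pos (by exact_mod_cast hm1)
  have hmr : (0:ℝ) < m := by exact_mod_cast hm0
  have hmga : (μ * n + 1) / (μ * (1 - 1/c') - (1 - 1/c)) ≤ m :=
    le_trans (le_trans (le_max_left _ _) (le_max_left _ _)) hm
  have hmge : 1 / (c' * ((2:ℝ)^(ε:ℝ) - 1)) ≤ m :=
    le_trans (le_trans (le_max_right _ _) (le_max_left _ _)) hm
  set m' := ⌈c' * (m:ℝ)⌉₊ with hm'def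
  have hm'c : c' * m ≤ (m':ℝ) := Nat.le_ceil _
  have hgapm : (1 - 1/c) * m ≤ μ * ((1 - 1/c') * m - n) := by
    have h1 := (div_le_iff₀ gap0).1 hmga
    nlinarith
  have maj := key_majorizes hp hq hc1 hcc' hpq i₀ hmax hμ hμ0 hm0 hm'c hgapm
  have hm'r : (0:ℝ) < m' := lt_of_lt_of_le (by positivity) hm'c
  have hm'0 : 0 < m' := by exact_mod_cast hm'r
  have hmono := hH.mono _ _ (kron_isProbVec hp (uniform_isProbVec hm0))
    (kron_isProbVec hq (uniform_isProbVec hm'0)) maj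
  rw [H_kron_uniform H hH hp hm0, H_kron_uniform H hH hq hm'0] at hmono
  have hlog : Real.logb 2 m' ≤ Real.logb 2 m + Real.logb 2 c' + ε := by
    have hm'up : (m':ℝ) ≤ c' * m + 1 := le_of_lt (Nat.ceil_lt_add_one (by positivity))
    have hpos2 : (0:ℝ) < c' * ((2:ℝ)^(ε:ℝ) - 1) := by nlinarith
    have h1m : 1 ≤ c' * m * ((2:ℝ)^(ε:ℝ) - 1) := by
      have h2 := (div_le_iff₀ hpos2).1 hmge
      nlinarith
    have hup2 : (m':ℝ) ≤ c' * m * (2:ℝ)^(ε:ℝ) := by nlinarith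
    have hlogle := Real.logb_le_logb_of_le (b := 2) (by norm_num) hm'r hup2
    rw [Real.logb_mul (by positivity) (by positivity),
      Real.logb_mul (by positivity) (by positivity),
      Real.logb_rpow (by norm_num) (by norm_num)] at hlogle
    linarith
  linarith

set_option maxHeartbeats 1000000 in
lemma liminf_part {p : Fin n → ℝ} (hp : IsProbVec p) (pk : ℕ → Fin n → ℝ)
    (hpk : ∀ k, IsProbVec (pk k) ∧ ∀ i, 0 < pk k i)
    (htend : ∀ i, Filter.Tendsto (fun k => pk k i) Filter.atTop (nhds (p i))) :
    H n p ≤ Filter.liminf (fun k => H n (pk k)) Filter.atTop := by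
  classical
  have hn : 0 < n := probVec_pos_dim hp
  have hbd : ∀ k, H n (pk k) ≤ Real.logb 2 n := by
    intro k
    refine (H_le_log_supp H hH (hpk k).1).trans ?_
    apply Real.logb_le_logb_of_le (by norm_num)
    · exact_mod_cast (supp_card_pos (hpk k).1).1
    · exact_mod_cast (show (Finset.univ.filter fun i => pk k i ≠ 0).card ≤ n by
        simpa using Finset.card_filter_le (Finset.univ : Finset (Fin n)) _)
  apply le_of_forall_pos_le_add
  intro ε hε
  obtain ⟨i₀, -, hi₀⟩ := Finset.exists_max_image Finset.univ p ⟨⟨0, hn⟩, Finset.mem_univ _⟩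
  have hpi₀ : 0 < p i₀ := by
    rcases lt_or_ge 0 (p i₀) with h | h
    · exact h
    · exfalso
      have hz : ∀ i, p i = 0 := fun i =>
        le_antisymm ((hi₀ i (Finset.mem_univ i)).trans h) (hp.1 i)
      have h2 := hp.2
      rw [Finset.sum_congr rfl (fun i _ => hz i)] at h2
      simpa using h2
  have hPne : (Finset.univ.filter (fun i => p i ≠ 0)).Nonempty :=
    Finset.card_pos.1 (supp_card_pos hp).1
  obtain ⟨iμ, hiμP, hiμ⟩ := Finset.exists_min_image _ p hPne
  set μ := p iμ with hμdef
  have hμ0 : 0 < μ :=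
    lt_of_le_of_ne (hp.1 iμ) (Ne.symm (Finset.mem_filter.1 hiμP).2)
  have hμ1 : μ ≤ 1 := probVec_le_one hp iμ
  have hμall : ∀ i, p i ≠ 0 → μ ≤ p i := fun i hi =>
    hiμ i (Finset.mem_filter.2 ⟨Finset.mem_univ i, hi⟩)
  set c' : ℝ := (2:ℝ) ^ (ε:ℝ) with hc'def
  have hc'gt : 1 < c' := by
    rw [hc'def, Real.one_lt_rpow_iff_of_pos (by norm_num)]
    left; exact ⟨by norm_num, hε⟩
  have hc'0 : (0:ℝ) < c' := one_pos.trans hc'gt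
  have hic' : 0 < 1 - 1/c' := by
    have : 1/c' < 1 := by rw [div_lt_one hc'0]; exact hc'gt
    linarith
  have hic'1 : 1 - 1/c' ≤ 1 := by
    have : 0 < 1/c' := by positivity
    linarith
  set β := μ * (1 - 1/c') with hβdef
  have hβ0 : 0 < β := mul_pos hμ0 hic'
  set θ := min (β/2) (1/2 : ℝ) with hθdef
  have hθ0 : 0 < θ := lt_min (by linarith) (by norm_num)
  have hθh : θ ≤ 1/2 := min_le_right _ _
  have h1θ : (0:ℝ) < 1 - θ := by linarith
  set c := (1-θ)⁻¹ with hcdef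
  have hc1 : 1 ≤ c := (one_le_inv₀ h1θ).2 (by linarith)
  have hcinv : 1/c = 1 - θ := by rw [hcdef, one_div, inv_inv]
  have hcθ : c * (1 - θ) = 1 := by
    rw [hcdef]; field_simp
  have hcgt : 1 < c := by
    rw [hcdef]
    rw [lt_inv_comm₀ one_pos h1θ]
    simpa using hθ0
  have hcc' : c ≤ c' := by
    rw [hcdef, inv_le_comm₀ h1θ hc'0, ← one_div]
    have h1 : θ ≤ β/2 := min_le_left _ _
    have h2 : β ≤ 1 - 1/c' := by nlinarith
    linarith
  have hgap : 1 - 1/c < μ * (1 - 1/c') := by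
    rw [hcinv, ← hβdef]
    have h1 : θ ≤ β/2 := min_le_left _ _
    linarith
  have hc0 : (0:ℝ) < c := lt_trans one_pos hcgt
  have hev : ∀ᶠ k in Filter.atTop, (∀ i, p i ≤ c * pk k i) ∧ (∀ i, pk k i ≤ c * p i₀) := by
    have e1 : ∀ᶠ k in Filter.atTop, ∀ i, p i ≤ c * pk k i := by
      rw [Filter.eventually_all]
      intro i
      rcases eq_or_ne (p i) 0 with hz | hnz
      · exact Filter.Eventually.of_forall fun k => by
          rw [hz]; exact mul_nonneg (by linarith) ((hpk k).1.1 i)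
      · have hpi : 0 < p i := lt_of_le_of_ne (hp.1 i) (Ne.symm hnz)
        have hlt : p i / c < p i := by
          rw [div_lt_iff₀ hc0]
          nlinarith
        filter_upwards [(htend i).eventually_const_lt hlt] with k hk
        rw [div_lt_iff₀ hc0] at hk
        nlinarith
    have e2 : ∀ᶠ k in Filter.atTop, ∀ i, pk k i ≤ c * p i₀ := by
      rw [Filter.eventually_all]
      intro i
      have hlt : p i < c * p i₀ := by
        have h1 : p i ≤ p i₀ := hi₀ i (Finset.mem_univ i)
        nlinarith
      exact ((htend i).eventually_lt_const hlt).mono fun k hk => hk.le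
    exact e1.and e2
  have hev2 : ∀ᶠ k in Filter.atTop, H n p - ε ≤ H n (pk k) := by
    filter_upwards [hev] with k hk
    obtain ⟨h1, h2⟩ := hk
    have hkey := key_entropy H hH hp (hpk k).1 hc1 hcc' h1 i₀ h2 hμall hμ0 hgap
    have hlogc' : Real.logb 2 c' = ε := by
      rw [hc'def]; exact Real.logb_rpow (by norm_num) (by norm_num)
    linarith
  have hlim := Filter.le_liminf_of_le
    ((Filter.isBoundedUnder_of ⟨Real.logb 2 n, fun k => hbd k⟩).isCoboundedUnder_ge)
    hev2
  linarith

set_option maxHeartbeats 1000000 in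
lemma cont_part :
    ContinuousOn (fun p => H n p) { p : Fin n → ℝ | IsProbVec p ∧ ∀ i, 0 < p i } := by
  classical
  intro p₀ hp₀mem
  obtain ⟨hp₀, hp₀pos⟩ := hp₀mem
  have hn : 0 < n := probVec_pos_dim hp₀
  apply Metric.continuousWithinAt_iff.2
  intro ε hε
  obtain ⟨i₀, -, hi₀⟩ := Finset.exists_max_image Finset.univ p₀ ⟨⟨0, hn⟩, Finset.mem_univ _⟩
  obtain ⟨iμ, -, hiμ⟩ := Finset.exists_min_image Finset.univ p₀ ⟨⟨0, hn⟩, Finset.mem_univ _⟩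
  set μ₀ := p₀ iμ with hμ₀def
  have hμ₀0 : 0 < μ₀ := hp₀pos iμ
  have hμ₀1 : μ₀ ≤ 1 := probVec_le_one hp₀ iμ
  have hμ₀le : ∀ i, μ₀ ≤ p₀ i := fun i => hiμ i (Finset.mem_univ i)
  set c' : ℝ := (2:ℝ) ^ (ε/2 : ℝ) with hc'def
  have hc'gt : 1 < c' := by
    rw [hc'def, Real.one_lt_rpow_iff_of_pos (by norm_num)]
    left; exact ⟨by norm_num, by linarith⟩
  have hc'0 : (0:ℝ) < c' := one_pos.trans hc'gt
  have hic' : 0 < 1 - 1/c' := by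
    have : 1/c' < 1 := by rw [div_lt_one hc'0]; exact hc'gt
    linarith
  set β := (μ₀/2) * (1 - 1/c') with hβdef
  have hβ0 : 0 < β := mul_pos (by linarith) hic'
  set θ := min (β/2) (1/2 : ℝ) with hθdef
  have hθ0 : 0 < θ := lt_min (by linarith) (by norm_num)
  have hθh : θ ≤ 1/2 := min_le_right _ _
  have h1θ : (0:ℝ) < 1 - θ := by linarith
  set c := (1-θ)⁻¹ with hcdef
  have hc1 : 1 ≤ c := (one_le_inv₀ h1θ).2 (by linarith)
  have hcinv : 1/c = 1 - θ := by rw [hcdef, one_div, inv_inv]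
  have hcθ : c * (1 - θ) = 1 := by rw [hcdef]; field_simp
  have hcc' : c ≤ c' := by
    rw [hcdef, inv_le_comm₀ h1θ hc'0, ← one_div]
    have h1 : θ ≤ β/2 := min_le_left _ _
    have h2 : β ≤ 1 - 1/c' := by nlinarith
    linarith
  have hgap : 1 - 1/c < (μ₀/2) * (1 - 1/c') := by
    rw [hcinv, ← hβdef]
    have h1 : θ ≤ β/2 := min_le_left _ _
    linarith
  have hc0 : (0:ℝ) < c := lt_of_lt_of_le one_pos hc1
  have hcm1 : θ ≤ c - 1 := by nlinarith
  set δ := min (μ₀/2) (θ * μ₀ / 2) with hδdef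
  have hδ0 : 0 < δ := lt_min (by linarith) (by positivity)
  refine ⟨δ, hδ0, ?_⟩
  intro pp hpmem hdist
  obtain ⟨hpv, hppos⟩ := hpmem
  have hclose : ∀ i, |pp i - p₀ i| < δ := fun i => by
    calc |pp i - p₀ i| = dist (pp i) (p₀ i) := (Real.dist_eq _ _).symm
      _ ≤ dist pp p₀ := dist_le_pi_dist pp p₀ i
      _ < δ := hdist
  have hδ1 : δ ≤ μ₀/2 := min_le_left _ _
  have hδ2 : δ ≤ θ * μ₀ / 2 := min_le_right _ _
  have hplow : ∀ i, μ₀/2 ≤ pp i := fun i => by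
    have h1 := (abs_lt.1 (hclose i)).1
    linarith [hμ₀le i]
  have hd1 : ∀ i, pp i ≤ c * p₀ i := fun i => by
    have h1 := (abs_lt.1 (hclose i)).2
    nlinarith [hμ₀le i, hp₀pos i]
  have hd2 : ∀ i, p₀ i ≤ c * pp i := fun i => by
    have h1 := (abs_lt.1 (hclose i)).1
    nlinarith [hplow i]
  have hmax1 : ∀ i, p₀ i ≤ c * pp i₀ := fun i => by
    have h1 := hd2 i₀
    have h2 := hi₀ i (Finset.mem_univ i)
    linarith
  have hmax2 : ∀ i, pp i ≤ c * p₀ i₀ := fun i => by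
    have h1 := hd1 i
    have h2 := hi₀ i (Finset.mem_univ i)
    nlinarith
  have hμp₀ : ∀ i, p₀ i ≠ 0 → μ₀/2 ≤ p₀ i := fun i _ => by linarith [hμ₀le i]
  have hμpp : ∀ i, pp i ≠ 0 → μ₀/2 ≤ pp i := fun i _ => hplow i
  have hμ2 : (0:ℝ) < μ₀/2 := by linarith
  have k1 := key_entropy H hH hpv hp₀ hc1 hcc' hd1 i₀ hmax1 hμpp hμ2 hgap
  have k2 := key_entropy H hH hp₀ hpv hc1 hcc' hd2 i₀ hmax2 hμp₀ hμ2 hgap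
  have hlogc' : Real.logb 2 c' = ε/2 := by
    rw [hc'def]; exact Real.logb_rpow (by norm_num) (by norm_num)
  rw [Real.dist_eq, abs_lt]
  constructor <;> [linarith; linarith]

end Entropy3

end Stmt13Aux

open Filter Topology in
/-- an entropy is continuous on `P_{>0}(n)` and lower semi-continuous
everywhere (along sequences in `P_{>0}(n)`), and satisfies
`−log(max_i p_i) ≤ H(p) ≤ log |supp(p)|` (binary logarithm). -/
theorem stmt13 (H : (n : ℕ) → (Fin n → ℝ) → ℝ) (hH : IsEntropy H) (n : ℕ) :
    ContinuousOn (fun p => H n p) { p : Fin n → ℝ | IsProbVec p ∧ ∀ i, 0 < p i } ∧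
    (∀ p : Fin n → ℝ, IsProbVec p → ∀ pk : ℕ → Fin n → ℝ,
      (∀ k, IsProbVec (pk k) ∧ ∀ i, 0 < pk k i) →
      (∀ i, Tendsto (fun k => pk k i) atTop (𝓝 (p i))) →
      H n p ≤ Filter.liminf (fun k => H n (pk k)) atTop) ∧
    ∀ p : Fin n → ℝ, IsProbVec p →
      -(Real.logb 2 (sSup { x | ∃ i, x = p i })) ≤ H n p ∧
      H n p ≤ Real.logb 2 ((Finset.univ.filter (fun i => p i ≠ 0)).card) := by
  refine ⟨Stmt13Aux.cont_part H hH, ?_, ?_⟩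
  · intro p hp pk hpk htend
    exact Stmt13Aux.liminf_part H hH hp pk hpk htend
  · intro p hp
    exact ⟨Stmt13Aux.H_ge_neg_log_max H hH hp, Stmt13Aux.H_le_log_supp H hH hp⟩
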